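/- (Upper semicontinuity of affinity) Let (σ_n) and (ρ_n) be sequences of probability measures on the circle converging weakly to probability measures σ and ρ respectively. Then limsup_{n→∞} G(σ_n, ρ_n) ≤ G(σ, ρ), where G denotes the Hellinger affinity. -/

import Mathlib

open MeasureTheory Filter Topology Real
open scoped ENNReal NNReal BoundedContinuousFunction

/-- The Hellinger affinity of two measures, computed with respect to the dominating
measure `σ + ρ`:  `G(σ,ρ) = ∫ √((dσ/dκ)(dρ/dκ)) dκ` with `κ = σ + ρ`. -/
noncomputable def hellingerAffinity {X : Type*} [MeasurableSpace X]
    (σ ρ : Measure X) : ℝ :=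
  ∫ x, Real.sqrt ((σ.rnDeriv (σ + ρ) x).toReal * (ρ.rnDeriv (σ + ρ) x).toReal) ∂(σ + ρ)


lemma my_sqrt_add_le {x y : ℝ} (hx : 0 ≤ x) (hy : 0 ≤ y) :
    Real.sqrt (x + y) ≤ Real.sqrt x + Real.sqrt y := by
  rw [show x + y = x + y from rfl]
  have h : x + y ≤ (Real.sqrt x + Real.sqrt y)^2 := by
    nlinarith [Real.sq_sqrt hx, Real.sq_sqrt hy, Real.sqrt_nonneg x, Real.sqrt_nonneg y]
  calc Real.sqrt (x+y) ≤ Real.sqrt ((Real.sqrt x + Real.sqrt y)^2) := Real.sqrt_le_sqrt h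
    _ = Real.sqrt x + Real.sqrt y := Real.sqrt_sq (by positivity)

lemma my_amgm {a b t : ℝ} (ha : 0 ≤ a) (hb : 0 ≤ b) (ht : 0 < t) :
    Real.sqrt (a * b) ≤ (t * a + b / t) / 2 := by
  have h1 : a * b = (t*a) * (b/t) := by field_simp
  rw [h1, Real.sqrt_mul (by positivity)]
  nlinarith [sq_nonneg (Real.sqrt (t*a) - Real.sqrt (b/t)), Real.sq_sqrt (show (0:ℝ) ≤ t*a by positivity),
    Real.sq_sqrt (show (0:ℝ) ≤ b/t by positivity)]

lemma my_exp_lip {a b M : ℝ} (ha : a ≤ M) (hb : b ≤ M) :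
    |Real.exp a - Real.exp b| ≤ Real.exp M * |a - b| := by
  wlog h : b ≤ a generalizing a b
  · rw [abs_sub_comm, abs_sub_comm a b]; exact this hb ha (le_of_not_ge h)
  have h1 : Real.exp a - Real.exp b ≤ Real.exp M * (a - b) := by
    have := Real.add_one_le_exp (b - a)
    have h2 : Real.exp a * (1 + (b - a)) ≤ Real.exp b := by
      calc Real.exp a * (1 + (b-a)) ≤ Real.exp a * Real.exp (b-a) := by
            nlinarith [Real.exp_pos a]
        _ = Real.exp b := by rw [← Real.exp_add]; ring_nf
    have h3 : Real.exp a ≤ Real.exp M := Real.exp_le_exp.2 ha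
    nlinarith [Real.exp_pos a]
  rw [abs_of_nonneg (by nlinarith [Real.exp_le_exp.2 h] : (0:ℝ) ≤ Real.exp a - Real.exp b),
    abs_of_nonneg (by linarith)]
  exact h1

lemma my_clamp_le {M s t : ℝ} (hs : |s| ≤ M) :
    |max (-M) (min M t) - s| ≤ |t - s| := by
  rw [abs_le] at hs
  rcases le_total t (-M) with h1 | h1
  · have hmin : min M t ≤ -M := le_trans (min_le_right _ _) h1
    rw [max_eq_left hmin]
    rw [abs_le]; constructor <;> rcases abs_le.1 (le_refl |t - s|) with _ <;>
      cases abs_cases (t - s) <;> nlinarith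
  · rcases le_total M t with h2 | h2
    · rw [min_eq_left h2, max_eq_right (by linarith : -M ≤ M)]
      rw [abs_le]; cases abs_cases (t - s) <;> constructor <;> nlinarith
    · rw [min_eq_right h2, max_eq_right h1]

lemma my_exp_sqrt {g h δ : ℝ} (hg : 0 ≤ g) (hh : 0 ≤ h) (hδ : 0 < δ) :
    Real.exp (Real.log (h + δ) / 2 - Real.log (g + δ) / 2)
      = Real.sqrt (h + δ) / Real.sqrt (g + δ) := by
  rw [Real.exp_sub]
  congr 1 <;>
  · rw [Real.sqrt_eq_rpow, Real.rpow_def_of_pos (by linarith)]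
    ring_nf

lemma my_key_pointwise {g h δ M u : ℝ} (hg : 0 ≤ g) (hg1 : g ≤ 1) (hh : 0 ≤ h) (hh1 : h ≤ 1)
    (hδ : 0 < δ) (hsM : |Real.log (h+δ) / 2 - Real.log (g+δ) / 2| ≤ M) (huM : |u| ≤ M) :
    g * Real.exp u + h * Real.exp (-u)
      ≤ 2 * Real.sqrt ((g+δ) * (h+δ))
        + 2 * Real.exp M * |u - (Real.log (h+δ) / 2 - Real.log (g+δ) / 2)| := by
  set s := Real.log (h+δ) / 2 - Real.log (g+δ) / 2 with hs
  have hgδ : (0:ℝ) < g + δ := by linarith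
  have hhδ : (0:ℝ) < h + δ := by linarith
  have hsqg : (0:ℝ) < Real.sqrt (g+δ) := Real.sqrt_pos.2 hgδ
  have hsqh : (0:ℝ) < Real.sqrt (h+δ) := Real.sqrt_pos.2 hhδ
  have hes : Real.exp s = Real.sqrt (h+δ) / Real.sqrt (g+δ) := my_exp_sqrt hg hh hδ
  have hens : Real.exp (-s) = Real.sqrt (g+δ) / Real.sqrt (h+δ) := by
    rw [hs, neg_sub]; exact my_exp_sqrt hh hg hδ
  have hsqmul : Real.sqrt ((g+δ)*(h+δ)) = Real.sqrt (g+δ) * Real.sqrt (h+δ) :=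
    Real.sqrt_mul hgδ.le _
  have h1 : Real.exp u ≤ Real.exp s + Real.exp M * |u - s| := by
    have h2 := my_exp_lip (abs_le.1 huM).2 ((le_abs_self s).trans hsM)
    linarith [(abs_le.1 h2).2]
  have h1' : Real.exp (-u) ≤ Real.exp (-s) + Real.exp M * |u - s| := by
    have hb : -u ≤ M := (abs_le.1 (abs_neg u ▸ huM)).2
    have hb' : -s ≤ M := (neg_le.2 (abs_le.1 hsM).1)
    have h2 := my_exp_lip hb hb'
    have : |(-u) - (-s)| = |u - s| := by rw [show (-u) - (-s) = -(u - s) by ring, abs_neg]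
    rw [this] at h2
    linarith [(abs_le.1 h2).2]
  have h3 : g * Real.exp s ≤ Real.sqrt ((g+δ)*(h+δ)) := by
    rw [hes, hsqmul]
    rw [mul_div_assoc', div_le_iff₀ hsqg]
    nlinarith [Real.mul_self_sqrt hgδ.le, hsqh.le, hsqg.le]
  have h4 : h * Real.exp (-s) ≤ Real.sqrt ((g+δ)*(h+δ)) := by
    rw [hens, hsqmul]
    rw [mul_div_assoc', div_le_iff₀ hsqh]
    nlinarith [Real.mul_self_sqrt hhδ.le, hsqg.le, hsqh.le]
  have hexpM : 0 < Real.exp M := Real.exp_pos M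
  have habs : 0 ≤ |u - s| := abs_nonneg _
  have p1 : g * Real.exp u ≤ Real.sqrt ((g+δ)*(h+δ)) + Real.exp M * |u - s| := by
    have q1 := mul_le_mul_of_nonneg_left h1 hg
    have q2 := mul_le_mul_of_nonneg_right hg1 (mul_nonneg hexpM.le habs)
    nlinarith
  have p2 : h * Real.exp (-u) ≤ Real.sqrt ((g+δ)*(h+δ)) + Real.exp M * |u - s| := by
    have q1 := mul_le_mul_of_nonneg_left h1' hh
    have q2 := mul_le_mul_of_nonneg_right hh1 (mul_nonneg hexpM.le habs)
    nlinarith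
  linarith

lemma my_sqrt_expand {g h δ : ℝ} (hg : 0 ≤ g) (hg1 : g ≤ 1) (hh : 0 ≤ h) (hh1 : h ≤ 1)
    (hδ : 0 < δ) :
    Real.sqrt ((g+δ) * (h+δ)) ≤ Real.sqrt (g*h) + (2 * Real.sqrt δ + δ) := by
  have e : (g+δ)*(h+δ) = g*h + (δ*g + (δ*h + δ^2)) := by ring
  rw [e]
  calc Real.sqrt (g*h + (δ*g + (δ*h + δ^2)))
      ≤ Real.sqrt (g*h) + Real.sqrt (δ*g + (δ*h + δ^2)) :=
        my_sqrt_add_le (by positivity) (by positivity)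
    _ ≤ Real.sqrt (g*h) + (Real.sqrt (δ*g) + Real.sqrt (δ*h + δ^2)) := by
        linarith [my_sqrt_add_le (show (0:ℝ) ≤ δ*g by positivity) (show (0:ℝ) ≤ δ*h + δ^2 by positivity)]
    _ ≤ Real.sqrt (g*h) + (Real.sqrt (δ*g) + (Real.sqrt (δ*h) + Real.sqrt (δ^2))) := by
        linarith [my_sqrt_add_le (show (0:ℝ) ≤ δ*h by positivity) (show (0:ℝ) ≤ δ^2 by positivity)]
    _ ≤ Real.sqrt (g*h) + (2 * Real.sqrt δ + δ) := by
        have e1 : Real.sqrt (δ*g) ≤ Real.sqrt δ := by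
          apply Real.sqrt_le_sqrt; nlinarith
        have e2 : Real.sqrt (δ*h) ≤ Real.sqrt δ := by
          apply Real.sqrt_le_sqrt; nlinarith
        have e3 : Real.sqrt (δ^2) = δ := Real.sqrt_sq hδ.le
        linarith

lemma my_integrable_of_bound {X : Type*} [MeasurableSpace X] {κ : Measure X} [IsFiniteMeasure κ]
    {f : X → ℝ} (hm : AEStronglyMeasurable f κ) (C : ℝ) (h : ∀ᵐ x ∂κ, |f x| ≤ C) :
    Integrable f κ :=
  Integrable.mono' (integrable_const C) hm (by simpa [Real.norm_eq_abs] using h)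

lemma my_rnDeriv_toReal_le_one {X : Type*} [MeasurableSpace X] (μ ν : Measure X)
    [IsFiniteMeasure μ] [IsFiniteMeasure ν] :
    ∀ᵐ x ∂(μ + ν), (μ.rnDeriv (μ + ν) x).toReal ≤ 1 := by
  filter_upwards [Measure.rnDeriv_le_one_of_le (Measure.le_add_right le_rfl : μ ≤ μ + ν)] with x hx
  calc (μ.rnDeriv (μ + ν) x).toReal ≤ (1 : ℝ≥0∞).toReal := ENNReal.toReal_mono (by simp) hx
    _ = 1 := by simp

lemma my_hellinger_le {X : Type*} [MeasurableSpace X] (μ ν : Measure X)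
    [IsProbabilityMeasure μ] [IsProbabilityMeasure ν]
    {f : X → ℝ} (hfm : Measurable f) {c C : ℝ} (hc : 0 < c) (hcC : c ≤ C)
    (hfc : ∀ x, c ≤ f x) (hfC : ∀ x, f x ≤ C) :
    hellingerAffinity μ ν ≤ (∫ x, f x ∂μ + ∫ x, (f x)⁻¹ ∂ν) / 2 := by
  set κ := μ + ν with hκ
  have hμκ : μ ≪ κ := (Measure.le_add_right le_rfl).absolutelyContinuous
  have hνκ : ν ≪ κ := (Measure.le_add_left le_rfl).absolutelyContinuous
  set g : X → ℝ := fun x => (μ.rnDeriv κ x).toReal with hgdef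
  set h : X → ℝ := fun x => (ν.rnDeriv κ x).toReal with hhdef
  have hgm : Measurable g := (Measure.measurable_rnDeriv μ κ).ennreal_toReal
  have hhm : Measurable h := (Measure.measurable_rnDeriv ν κ).ennreal_toReal
  have hg0 : ∀ x, 0 ≤ g x := fun x => ENNReal.toReal_nonneg
  have hh0 : ∀ x, 0 ≤ h x := fun x => ENNReal.toReal_nonneg
  have hg1 : ∀ᵐ x ∂κ, g x ≤ 1 := my_rnDeriv_toReal_le_one μ ν
  have hh1 : ∀ᵐ x ∂κ, h x ≤ 1 := by
    have := my_rnDeriv_toReal_le_one ν μ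
    rwa [add_comm ν μ] at this
  have hC : 0 < C := hc.trans_le hcC
  have I1 : Integrable (fun x => Real.sqrt (g x * h x)) κ := by
    apply my_integrable_of_bound ((hgm.mul hhm).sqrt.aestronglyMeasurable) 1
    filter_upwards [hg1, hh1] with x h1 h2
    rw [abs_of_nonneg (Real.sqrt_nonneg _)]
    calc Real.sqrt (g x * h x) ≤ Real.sqrt 1 := Real.sqrt_le_sqrt (by nlinarith [hg0 x, hh0 x])
      _ = 1 := Real.sqrt_one
  have I2 : Integrable (fun x => f x * g x) κ := by
    apply my_integrable_of_bound ((hfm.mul hgm).aestronglyMeasurable) C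
    filter_upwards [hg1] with x h1
    simp only [Pi.mul_apply]
    rw [abs_of_nonneg (mul_nonneg (hc.le.trans (hfc x)) (hg0 x))]
    calc f x * g x ≤ C * 1 := mul_le_mul (hfC x) h1 (hg0 x) hC.le
      _ = C := mul_one C
  have I3 : Integrable (fun x => (f x)⁻¹ * h x) κ := by
    apply my_integrable_of_bound ((hfm.inv.mul hhm).aestronglyMeasurable) c⁻¹
    filter_upwards [hh1] with x h1
    have hfx : 0 < f x := hc.trans_le (hfc x)
    simp only [Pi.mul_apply, Pi.inv_apply]
    rw [abs_of_nonneg (mul_nonneg (by positivity) (hh0 x))]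
    calc (f x)⁻¹ * h x ≤ c⁻¹ * 1 :=
          mul_le_mul (inv_anti₀ hc (hfc x)) h1 (hh0 x) (by positivity)
      _ = c⁻¹ := mul_one _
  have key : ∀ᵐ x ∂κ, Real.sqrt (g x * h x) ≤ (f x * g x + (f x)⁻¹ * h x) / 2 := by
    filter_upwards with x
    have hfx : 0 < f x := hc.trans_le (hfc x)
    have hd : (f x)⁻¹ * h x = h x / f x := inv_mul_eq_div _ _
    rw [hd]
    exact my_amgm (hg0 x) (hh0 x) hfx
  have e1 : ∫ x, f x * g x ∂κ = ∫ x, f x ∂μ := by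
    rw [← MeasureTheory.integral_rnDeriv_smul hμκ]
    congr 1; ext x; simp [hgdef, smul_eq_mul, mul_comm]
  have e2 : ∫ x, (f x)⁻¹ * h x ∂κ = ∫ x, (f x)⁻¹ ∂ν := by
    rw [← MeasureTheory.integral_rnDeriv_smul hνκ]
    congr 1; ext x; simp [hhdef, smul_eq_mul, mul_comm]
  calc hellingerAffinity μ ν = ∫ x, Real.sqrt (g x * h x) ∂κ := rfl
    _ ≤ ∫ x, (f x * g x + (f x)⁻¹ * h x) / 2 ∂κ :=
        integral_mono_ae I1 ((I2.add I3).div_const 2) key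
    _ = ((∫ x, f x * g x ∂κ) + ∫ x, (f x)⁻¹ * h x ∂κ) / 2 := by
        rw [integral_div, integral_add I2 I3]
    _ = (∫ x, f x ∂μ + ∫ x, (f x)⁻¹ ∂ν) / 2 := by rw [e1, e2]

open scoped BoundedContinuousFunction in
set_option maxHeartbeats 2000000 in
lemma my_exists_good (σ ρ : Measure (AddCircle (1:ℝ)))
    [IsProbabilityMeasure σ] [IsProbabilityMeasure ρ] {ε : ℝ} (hε : 0 < ε) :
    ∃ f : AddCircle (1:ℝ) → ℝ, ∃ c C : ℝ, Continuous f ∧ 0 < c ∧ c ≤ C ∧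
      (∀ x, c ≤ f x) ∧ (∀ x, f x ≤ C) ∧
      (∫ x, f x ∂σ + ∫ x, (f x)⁻¹ ∂ρ) / 2 ≤ hellingerAffinity σ ρ + ε := by
  set κ := σ + ρ with hκ
  have hσκ : σ ≪ κ := (Measure.le_add_right le_rfl).absolutelyContinuous
  have hρκ : ρ ≪ κ := (Measure.le_add_left le_rfl).absolutelyContinuous
  set δ : ℝ := min ((ε/16)^2) (ε/8) with hδdef
  have hδ : 0 < δ := lt_min (by positivity) (by positivity)
  have hδ1 : Real.sqrt δ ≤ ε/16 := by
    calc Real.sqrt δ ≤ Real.sqrt ((ε/16)^2) := Real.sqrt_le_sqrt (min_le_left _ _)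
      _ = ε/16 := Real.sqrt_sq (by positivity)
  have hδ2 : δ ≤ ε/8 := min_le_right _ _
  set gσ : AddCircle (1:ℝ) → ℝ := fun x => (σ.rnDeriv κ x).toReal with hgσ
  set gρ : AddCircle (1:ℝ) → ℝ := fun x => (ρ.rnDeriv κ x).toReal with hgρ
  have hgσm : Measurable gσ := (Measure.measurable_rnDeriv σ κ).ennreal_toReal
  have hgρm : Measurable gρ := (Measure.measurable_rnDeriv ρ κ).ennreal_toReal
  set g' : AddCircle (1:ℝ) → ℝ := fun x => min (gσ x) 1 with hg'def
  set h' : AddCircle (1:ℝ) → ℝ := fun x => min (gρ x) 1 with hh'def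
  have hg'm : Measurable g' := hgσm.min measurable_const
  have hh'm : Measurable h' := hgρm.min measurable_const
  have hg'0 : ∀ x, 0 ≤ g' x := fun x => le_min ENNReal.toReal_nonneg zero_le_one
  have hh'0 : ∀ x, 0 ≤ h' x := fun x => le_min ENNReal.toReal_nonneg zero_le_one
  have hg'1 : ∀ x, g' x ≤ 1 := fun x => min_le_right _ _
  have hh'1 : ∀ x, h' x ≤ 1 := fun x => min_le_right _ _
  have hg'ae : ∀ᵐ x ∂κ, g' x = gσ x := by
    filter_upwards [my_rnDeriv_toReal_le_one σ ρ] with x hx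
    exact min_eq_left hx
  have hh'ae : ∀ᵐ x ∂κ, h' x = gρ x := by
    have := my_rnDeriv_toReal_le_one ρ σ
    rw [add_comm ρ σ] at this
    filter_upwards [this] with x hx
    exact min_eq_left hx
  set s : AddCircle (1:ℝ) → ℝ := fun x => Real.log (h' x + δ) / 2 - Real.log (g' x + δ) / 2
    with hsdef
  have hsm : Measurable s := by
    apply Measurable.sub <;> apply Measurable.div_const <;> apply Real.measurable_log.comp
    · exact hh'm.add_const δ
    · exact hg'm.add_const δ
  set M : ℝ := Real.log ((1+δ)/δ) / 2 with hMdef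
  have hM0 : 0 ≤ M := by
    apply div_nonneg _ (by norm_num)
    apply Real.log_nonneg
    rw [le_div_iff₀ hδ]; linarith
  have hlogM : Real.log ((1+δ)/δ) = Real.log (1+δ) - Real.log δ :=
    Real.log_div (by linarith) hδ.ne'
  have hsM : ∀ x, |s x| ≤ M := by
    intro x
    have l1 : Real.log δ ≤ Real.log (h' x + δ) :=
      Real.log_le_log hδ (by linarith [hh'0 x])
    have l2 : Real.log (h' x + δ) ≤ Real.log (1+δ) :=
      Real.log_le_log (by linarith [hh'0 x]) (by linarith [hh'1 x])
    have l3 : Real.log δ ≤ Real.log (g' x + δ) :=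
      Real.log_le_log hδ (by linarith [hg'0 x])
    have l4 : Real.log (g' x + δ) ≤ Real.log (1+δ) :=
      Real.log_le_log (by linarith [hg'0 x]) (by linarith [hg'1 x])
    rw [abs_le, hsdef, hMdef, hlogM]
    constructor <;> [skip; skip] <;> simp only [] <;> nlinarith
  have hsint : Integrable s κ := my_integrable_of_bound hsm.aestronglyMeasurable M
    (Eventually.of_forall hsM)
  set ε' : ℝ := ε / (2 * Real.exp M) with hε'def
  have hε' : 0 < ε' := by positivity
  obtain ⟨u₀, hu₀, hu₀i⟩ := hsint.exists_boundedContinuous_integral_sub_le hε'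
  set u : AddCircle (1:ℝ) → ℝ := fun x => max (-M) (min M (u₀ x)) with hudef
  have hucont : Continuous u := continuous_const.max (continuous_const.min u₀.continuous)
  have huM : ∀ x, |u x| ≤ M := by
    intro x
    rw [abs_le]
    exact ⟨le_max_left _ _, max_le (by linarith) ((min_le_left _ _))⟩
  have hus : ∀ x, |u x - s x| ≤ ‖s x - u₀ x‖ := by
    intro x
    calc |u x - s x| ≤ |u₀ x - s x| := my_clamp_le (hsM x)
      _ = ‖s x - u₀ x‖ := by rw [abs_sub_comm, Real.norm_eq_abs]
  refine ⟨fun x => Real.exp (u x), Real.exp (-M), Real.exp M,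
    Real.continuous_exp.comp hucont, Real.exp_pos _, Real.exp_le_exp.2 (by linarith),
    fun x => Real.exp_le_exp.2 (abs_le.1 (huM x)).1,
    fun x => Real.exp_le_exp.2 (abs_le.1 (huM x)).2, ?_⟩
  set f : AddCircle (1:ℝ) → ℝ := fun x => Real.exp (u x) with hfdef
  have hfm : Measurable f := Real.measurable_exp.comp hucont.measurable
  have hfb : ∀ x, f x ≤ Real.exp M := fun x => Real.exp_le_exp.2 (abs_le.1 (huM x)).2
  have hf0 : ∀ x, 0 < f x := fun x => Real.exp_pos _
  have hfnb : ∀ x, Real.exp (-(u x)) ≤ Real.exp M := fun x =>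
    Real.exp_le_exp.2 (by linarith [(abs_le.1 (huM x)).1])
  have IB1a : Integrable (fun x => gσ x * f x) κ := by
    apply my_integrable_of_bound ((hgσm.mul hfm).aestronglyMeasurable) (Real.exp M)
    filter_upwards [my_rnDeriv_toReal_le_one σ ρ] with x hx
    simp only [Pi.mul_apply]
    rw [abs_of_nonneg (mul_nonneg ENNReal.toReal_nonneg (hf0 x).le)]
    calc gσ x * f x ≤ 1 * Real.exp M :=
          mul_le_mul hx (hfb x) (hf0 x).le zero_le_one
      _ = Real.exp M := one_mul _
  have IB1b : Integrable (fun x => gρ x * Real.exp (-(u x))) κ := by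
    have hmneg : Measurable (fun x => Real.exp (-(u x))) := by fun_prop
    apply my_integrable_of_bound ((hgρm.mul hmneg).aestronglyMeasurable) (Real.exp M)
    have h1 := my_rnDeriv_toReal_le_one ρ σ
    rw [add_comm ρ σ] at h1
    filter_upwards [h1] with x hx
    simp only [Pi.mul_apply]
    rw [abs_of_nonneg (mul_nonneg ENNReal.toReal_nonneg (Real.exp_pos _).le)]
    calc gρ x * Real.exp (-(u x)) ≤ 1 * Real.exp M :=
          mul_le_mul hx (hfnb x) (Real.exp_pos _).le zero_le_one
      _ = Real.exp M := one_mul _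
  have IB2a : Integrable (fun x => Real.sqrt ((g' x + δ) * (h' x + δ))) κ := by
    apply my_integrable_of_bound
      (((hg'm.add_const δ).mul (hh'm.add_const δ)).sqrt.aestronglyMeasurable) (1+δ)
    filter_upwards with x
    rw [abs_of_nonneg (Real.sqrt_nonneg _)]
    calc Real.sqrt ((g' x + δ) * (h' x + δ)) ≤ Real.sqrt ((1+δ)^2) := by
          apply Real.sqrt_le_sqrt
          nlinarith [hg'0 x, hh'0 x, hg'1 x, hh'1 x]
      _ = 1+δ := Real.sqrt_sq (by linarith)
  have IB2b : Integrable (fun x => |u x - s x|) κ := by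
    apply my_integrable_of_bound ((hucont.measurable.sub hsm).abs.aestronglyMeasurable) (2*M)
    filter_upwards with x
    rw [abs_abs]
    calc |u x - s x| ≤ |u x| + |s x| := abs_sub _ _
      _ ≤ 2*M := by linarith [huM x, hsM x]
  have IB3 : Integrable (fun x => Real.sqrt (g' x * h' x)) κ := by
    apply my_integrable_of_bound ((hg'm.mul hh'm).sqrt.aestronglyMeasurable) 1
    filter_upwards with x
    rw [abs_of_nonneg (Real.sqrt_nonneg _)]
    calc Real.sqrt (g' x * h' x) ≤ Real.sqrt 1 := by
          apply Real.sqrt_le_sqrt; nlinarith [hg'0 x, hh'0 x, hg'1 x, hh'1 x]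
      _ = 1 := Real.sqrt_one
  haveI : IsFiniteMeasure κ := by rw [hκ]; infer_instance
  haveI : σ.HaveLebesgueDecomposition κ := Measure.haveLebesgueDecomposition_of_finiteMeasure
  haveI : ρ.HaveLebesgueDecomposition κ := Measure.haveLebesgueDecomposition_of_finiteMeasure
  have e1 : ∫ x, gσ x * f x ∂κ = ∫ x, f x ∂σ := by
    rw [← MeasureTheory.integral_rnDeriv_smul hσκ (f := f)]
    congr 1
  have e2 : ∫ x, gρ x * Real.exp (-(u x)) ∂κ = ∫ x, (f x)⁻¹ ∂ρ := by
    rw [← MeasureTheory.integral_rnDeriv_smul hρκ (f := fun x => (f x)⁻¹)]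
    congr 1
    ext x
    simp [hfdef, hgρ, Real.exp_neg, smul_eq_mul]
  have step1 : ∫ x, (gσ x * f x + gρ x * Real.exp (-(u x))) ∂κ
      ≤ ∫ x, (2 * Real.sqrt ((g' x + δ) * (h' x + δ)) + 2 * Real.exp M * |u x - s x|) ∂κ := by
    apply integral_mono_ae (IB1a.add IB1b)
      ((IB2a.const_mul 2).add (IB2b.const_mul (2 * Real.exp M)))
    filter_upwards [hg'ae, hh'ae] with x ex1 ex2
    simp only [Pi.add_apply]
    rw [← ex1, ← ex2]
    exact my_key_pointwise (hg'0 x) (hg'1 x) (hh'0 x) (hh'1 x) hδ (hsM x) (huM x)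
  have step2 : ∫ x, (2 * Real.sqrt ((g' x + δ) * (h' x + δ)) + 2 * Real.exp M * |u x - s x|) ∂κ
      = 2 * (∫ x, Real.sqrt ((g' x + δ) * (h' x + δ)) ∂κ)
        + 2 * Real.exp M * (∫ x, |u x - s x| ∂κ) := by
    rw [integral_add (IB2a.const_mul 2) (IB2b.const_mul (2 * Real.exp M)),
      integral_const_mul, integral_const_mul]
  have hκuniv : (κ Set.univ).toReal = 2 := by
    simp [hκ, Measure.add_apply, one_add_one_eq_two]
  have step3 : ∫ x, Real.sqrt ((g' x + δ) * (h' x + δ)) ∂κ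
      ≤ hellingerAffinity σ ρ + (2 * Real.sqrt δ + δ) * 2 := by
    have m1 : ∫ x, Real.sqrt ((g' x + δ) * (h' x + δ)) ∂κ
        ≤ ∫ x, (Real.sqrt (g' x * h' x) + (2 * Real.sqrt δ + δ)) ∂κ := by
      apply integral_mono IB2a (IB3.add (integrable_const _))
      intro x
      exact my_sqrt_expand (hg'0 x) (hg'1 x) (hh'0 x) (hh'1 x) hδ
    have m2 : ∫ x, (Real.sqrt (g' x * h' x) + (2 * Real.sqrt δ + δ)) ∂κ
        = (∫ x, Real.sqrt (g' x * h' x) ∂κ) + (2 * Real.sqrt δ + δ) * 2 := by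
      rw [integral_add IB3 (integrable_const _), integral_const, measureReal_def, hκuniv, smul_eq_mul, mul_comm]
    have m3 : ∫ x, Real.sqrt (g' x * h' x) ∂κ = hellingerAffinity σ ρ := by
      apply integral_congr_ae
      filter_upwards [hg'ae, hh'ae] with x ex1 ex2
      rw [ex1, ex2]
    linarith
  have step4 : ∫ x, |u x - s x| ∂κ ≤ ε' := by
    calc ∫ x, |u x - s x| ∂κ ≤ ∫ x, ‖s x - u₀ x‖ ∂κ :=
          integral_mono IB2b (hsint.sub hu₀i).norm hus
      _ ≤ ε' := hu₀
  have hsplit : ∫ x, (gσ x * f x + gρ x * Real.exp (-(u x))) ∂κ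
      = (∫ x, f x ∂σ) + ∫ x, (f x)⁻¹ ∂ρ := by
    rw [integral_add IB1a IB1b, e1, e2]
  have hexpε : Real.exp M * ε' = ε / 2 := by
    rw [hε'def]
    field_simp
  have hδbound : (2 * Real.sqrt δ + δ) * 2 ≤ ε / 2 := by
    have h0 : 0 ≤ Real.sqrt δ := Real.sqrt_nonneg δ
    nlinarith
  have hexpMpos : (0:ℝ) < Real.exp M := Real.exp_pos M
  have hIuple : 2 * Real.exp M * (∫ x, |u x - s x| ∂κ) ≤ 2 * (ε/2) := by
    calc 2 * Real.exp M * (∫ x, |u x - s x| ∂κ) ≤ 2 * Real.exp M * ε' := by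
          apply mul_le_mul_of_nonneg_left step4 (by positivity)
      _ = 2 * (ε/2) := by rw [mul_assoc, hexpε]
  linarith [step1, hsplit ▸ step1]


/-- Coquet–Mendès-France–Kamae: if `σ_n → σ` and `ρ_n → ρ` weakly
(as probability measures on the circle), then `limsup G(σ_n, ρ_n) ≤ G(σ, ρ)`. -/
theorem limsup_affinity_le
    (σn ρn : ℕ → ProbabilityMeasure (AddCircle (1:ℝ)))
    (σ ρ : ProbabilityMeasure (AddCircle (1:ℝ)))
    (hσ : Tendsto σn atTop (𝓝 σ)) (hρ : Tendsto ρn atTop (𝓝 ρ)) :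
    Filter.limsup (fun n => hellingerAffinity (σn n : Measure (AddCircle (1:ℝ)))
        (ρn n : Measure (AddCircle (1:ℝ)))) atTop
      ≤ hellingerAffinity (σ : Measure (AddCircle (1:ℝ))) (ρ : Measure (AddCircle (1:ℝ))) := by
  apply le_of_forall_pos_le_add
  intro ε hε
  obtain ⟨f, c, C, hfcont, hc, hcC, hfc, hfC, hkey⟩ :=
    my_exists_good (σ : Measure (AddCircle (1:ℝ))) (ρ : Measure (AddCircle (1:ℝ))) hε
  have hfinv : Continuous fun x => (f x)⁻¹ :=
    hfcont.inv₀ (fun x => (hc.trans_le (hfc x)).ne')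
  set F : (AddCircle (1:ℝ)) →ᵇ ℝ := BoundedContinuousFunction.mkOfCompact ⟨f, hfcont⟩ with hF
  set Fi : (AddCircle (1:ℝ)) →ᵇ ℝ := BoundedContinuousFunction.mkOfCompact ⟨_, hfinv⟩ with hFi
  have h1 : Tendsto (fun n => ∫ x, f x ∂(σn n : Measure (AddCircle (1:ℝ)))) atTop
      (𝓝 (∫ x, f x ∂(σ : Measure (AddCircle (1:ℝ))))) := by
    have := (ProbabilityMeasure.tendsto_iff_forall_integral_tendsto.mp hσ) F
    simpa [hF] using this
  have h2 : Tendsto (fun n => ∫ x, (f x)⁻¹ ∂(ρn n : Measure (AddCircle (1:ℝ)))) atTop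
      (𝓝 (∫ x, (f x)⁻¹ ∂(ρ : Measure (AddCircle (1:ℝ))))) := by
    have := (ProbabilityMeasure.tendsto_iff_forall_integral_tendsto.mp hρ) Fi
    simpa [hFi] using this
  have h3 : Tendsto (fun n => (∫ x, f x ∂(σn n : Measure (AddCircle (1:ℝ)))
      + ∫ x, (f x)⁻¹ ∂(ρn n : Measure (AddCircle (1:ℝ)))) / 2) atTop
      (𝓝 ((∫ x, f x ∂(σ : Measure (AddCircle (1:ℝ)))
      + ∫ x, (f x)⁻¹ ∂(ρ : Measure (AddCircle (1:ℝ)))) / 2)) := (h1.add h2).div_const 2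
  have hle : ∀ n, hellingerAffinity (σn n : Measure (AddCircle (1:ℝ)))
      (ρn n : Measure (AddCircle (1:ℝ)))
      ≤ (∫ x, f x ∂(σn n : Measure (AddCircle (1:ℝ)))
        + ∫ x, (f x)⁻¹ ∂(ρn n : Measure (AddCircle (1:ℝ)))) / 2 := fun n =>
    my_hellinger_le _ _ hfcont.measurable hc hcC hfc hfC
  have hnonneg : ∀ n, 0 ≤ hellingerAffinity (σn n : Measure (AddCircle (1:ℝ)))
      (ρn n : Measure (AddCircle (1:ℝ))) := fun n =>
    integral_nonneg (fun x => Real.sqrt_nonneg _)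
  calc Filter.limsup (fun n => hellingerAffinity (σn n : Measure (AddCircle (1:ℝ)))
        (ρn n : Measure (AddCircle (1:ℝ)))) atTop
      ≤ Filter.limsup (fun n => (∫ x, f x ∂(σn n : Measure (AddCircle (1:ℝ)))
        + ∫ x, (f x)⁻¹ ∂(ρn n : Measure (AddCircle (1:ℝ)))) / 2) atTop := by
        refine Filter.limsup_le_limsup (Eventually.of_forall hle) ?_ ?_
        · exact (Filter.isBoundedUnder_of (r := (· ≥ ·)) ⟨0, fun n => hnonneg n⟩).isCoboundedUnder_le
        · exact h3.isBoundedUnder_le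
    _ = (∫ x, f x ∂(σ : Measure (AddCircle (1:ℝ)))
        + ∫ x, (f x)⁻¹ ∂(ρ : Measure (AddCircle (1:ℝ)))) / 2 := h3.limsup_eq
    _ ≤ hellingerAffinity (σ : Measure (AddCircle (1:ℝ))) (ρ : Measure (AddCircle (1:ℝ))) + ε :=
        hkey
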